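/- Let v(t) be the topological solution of the Riemann hierarchy (initial data v(x,0,0,…) = x). Then for all k_1,…,k_N ≥ 0 with N ≥ 1, the mixed derivative satisfies ∂_{t_{k_1}}⋯∂_{t_{k_N}} v = ∂_x^N ( v^{k_1+⋯+k_N+1} / (k_1!⋯k_N!·(k_1+⋯+k_N+1)) ), where ∂_x = ∂_{t_0}. -/

import Mathlib

noncomputable section
open scoped BigOperators

/-- The topological solution `v^top` of the Riemann hierarchy, as a formal power
series in `t_0, t_1, t_2, …`: `v^top = Σ_{k≥1} (1/k) Σ_{p_1+⋯+p_k=k-1} ∏ t_{p_i}/p_i!`,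
written coefficientwise. -/
def vtop : MvPowerSeries ℕ ℂ := fun m =>
  if 1 ≤ (m.sum fun _ n => n) ∧ (m.sum fun i n => i * n) + 1 = (m.sum fun _ n => n) then
    (((m.sum fun _ n => n) - 1).factorial : ℂ) /
      (m.prod fun i n => ((n.factorial : ℂ) * (i.factorial : ℂ) ^ n))
  else 0

/-- Partial derivative `∂/∂t_i` on formal power series in `t_0, t_1, …`. -/
def pd (i : ℕ) (f : MvPowerSeries ℕ ℂ) : MvPowerSeries ℕ ℂ := fun m =>
  ((m i : ℂ) + 1) * MvPowerSeries.coeff (m + Finsupp.single i 1) f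

/-- Restriction `t_0 = 0` of a formal power series. -/
def setZero (f : MvPowerSeries ℕ ℂ) : MvPowerSeries ℕ ℂ := fun m =>
  if m 0 = 0 then MvPowerSeries.coeff m f else 0

/-- `v^s_m := (∂_x^m v^top)|_{t_0=0}`, with `x = t_0`. -/
def vs (m : ℕ) : MvPowerSeries ℕ ℂ := setZero ((pd 0)^[m] vtop)

/-- The monomial `t_{μ+1} = ∏_{i ∈ μ} t_{i+1}` indexed by a multiset `μ`. -/
def tmon (μ : Multiset ℕ) : MvPowerSeries ℕ ℂ :=
  (μ.map fun i => (MvPowerSeries.X (i + 1) : MvPowerSeries ℕ ℂ)).prod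

/-- The monomial `v^s_{μ+1} = ∏_{i ∈ μ} v^s_{i+1}` indexed by a multiset `μ`. -/
def vsmon (μ : Multiset ℕ) : MvPowerSeries ℕ ℂ := (μ.map fun i => vs (i + 1)).prod

def deg (m : ℕ →₀ ℕ) : ℕ := m.sum fun _ n => n
def wt (m : ℕ →₀ ℕ) : ℕ := m.sum fun i n => i * n
def den (m : ℕ →₀ ℕ) : ℂ := m.prod fun i n => (n.factorial : ℂ) * (i.factorial : ℂ) ^ n

lemma deg_add (m m' : ℕ →₀ ℕ) : deg (m + m') = deg m + deg m' := by
  simpa [deg] using Finsupp.sum_add_index' (h := fun _ n => (n:ℕ)) (fun _ => rfl) (fun _ _ _ => rfl)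

lemma wt_add (m m' : ℕ →₀ ℕ) : wt (m + m') = wt m + wt m' := by
  simpa [wt] using Finsupp.sum_add_index' (h := fun i n => i * n) (fun i => by simp)
    (fun i a b => Nat.mul_add i a b)

lemma deg_single (k n : ℕ) : deg (Finsupp.single k n) = n := by
  simp [deg, Finsupp.sum_single_index]

lemma wt_single (k n : ℕ) : wt (Finsupp.single k n) = k * n := by
  simp [wt, Finsupp.sum_single_index]

lemma den_ne_zero (m : ℕ →₀ ℕ) : den m ≠ 0 := by
  refine Finset.prod_ne_zero_iff.2 fun i _ => ?_
  exact mul_ne_zero (Nat.cast_ne_zero.2 (Nat.factorial_ne_zero _))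
    (pow_ne_zero _ (Nat.cast_ne_zero.2 (Nat.factorial_ne_zero _)))

lemma sub_add_single {m : ℕ →₀ ℕ} {k : ℕ} (h : m k ≠ 0) :
    (m - Finsupp.single k 1) + Finsupp.single k 1 = m :=
  tsub_add_cancel_of_le (Finsupp.single_le_iff.2 (Nat.one_le_iff_ne_zero.2 h))

lemma deg_sub_single {m : ℕ →₀ ℕ} {k : ℕ} (h : m k ≠ 0) :
    deg (m - Finsupp.single k 1) + 1 = deg m := by
  conv_rhs => rw [← sub_add_single h]
  rw [deg_add, deg_single]

lemma wt_sub_single {m : ℕ →₀ ℕ} {k : ℕ} (h : m k ≠ 0) :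
    wt (m - Finsupp.single k 1) + k = wt m := by
  conv_rhs => rw [← sub_add_single h]
  rw [wt_add, wt_single, mul_one]

lemma erase_sub_single (m : ℕ →₀ ℕ) (k : ℕ) :
    (m - Finsupp.single k 1).erase k = m.erase k := by
  ext i
  by_cases hik : i = k
  · subst hik; simp
  · simp [Finsupp.erase_ne hik, Finsupp.tsub_apply, Finsupp.single_eq_of_ne' (Ne.symm hik)]

lemma den_sub_single {m : ℕ →₀ ℕ} {k : ℕ} (h : m k ≠ 0) :
    den m = (m k : ℂ) * (k.factorial : ℂ) * den (m - Finsupp.single k 1) := by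
  have hg : ∀ i : ℕ, ((Nat.factorial (0:ℕ) : ℂ) * (i.factorial : ℂ) ^ (0:ℕ)) = 1 := by simp
  have e1 := (Finsupp.mul_prod_erase' (m - Finsupp.single k 1) k
    (fun i n => (n.factorial : ℂ) * (i.factorial : ℂ) ^ n) (by simp)).symm
  have e2 := (Finsupp.mul_prod_erase' m k
    (fun i n => (n.factorial : ℂ) * (i.factorial : ℂ) ^ n) (by simp)).symm
  rw [den, den, e1, e2, erase_sub_single]
  have hmk : (m - Finsupp.single k 1 : ℕ →₀ ℕ) k = m k - 1 := by
    simp [Finsupp.tsub_apply]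
  rw [hmk]
  obtain ⟨n, hn⟩ : ∃ n, m k = n + 1 := ⟨m k - 1, (Nat.succ_pred_eq_of_pos (Nat.pos_of_ne_zero h)).symm⟩
  rw [hn]
  simp [Nat.factorial_succ, pow_succ]
  push_cast
  ring
def Va : ℕ → MvPowerSeries ℕ ℂ
  | 0 => 1
  | a + 1 => fun m => if wt m + (a + 1) = deg m then
      (((a + 1 : ℕ)) : ℂ) * (((deg m - 1).factorial : ℕ) : ℂ) / den m else 0

lemma coeff_Va_succ (a : ℕ) (m : ℕ →₀ ℕ) :
    MvPowerSeries.coeff m (Va (a + 1)) = if wt m + (a + 1) = deg m then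
      (((a + 1 : ℕ)) : ℂ) * (((deg m - 1).factorial : ℕ) : ℂ) / den m else 0 := rfl

lemma coeff_Va_zero (m : ℕ →₀ ℕ) :
    MvPowerSeries.coeff m (Va 0) = if m = 0 then 1 else 0 :=
  MvPowerSeries.coeff_one _

lemma eq_single_of_deg_one {m : ℕ →₀ ℕ} (h : deg m = 1) : ∃ i, m = Finsupp.single i 1 := by
  have hs : ∑ k ∈ m.support, m k = 1 := h
  have hne : m.support.Nonempty := by
    rcases Finset.eq_empty_or_nonempty m.support with he | hne
    · exfalso; rw [he] at hs; simp at hs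
    · exact hne
  obtain ⟨i, hi⟩ := hne
  refine ⟨i, ?_⟩
  have hmi : 1 ≤ m i := Nat.one_le_iff_ne_zero.2 (Finsupp.mem_support_iff.1 hi)
  ext j
  by_cases hj : j = i
  · subst hj
    have := Finset.single_le_sum (f := fun k => m k) (fun _ _ => Nat.zero_le _) hi
    rw [hs] at this
    simp [Nat.le_antisymm this hmi]
  · rw [Finsupp.single_eq_of_ne' (Ne.symm hj)]
    by_contra hmj
    have hjs : j ∈ m.support := Finsupp.mem_support_iff.2 hmj
    have hsub : ({i, j} : Finset ℕ) ⊆ m.support := by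
      intro x hx; simp at hx; rcases hx with h | h <;> subst h <;> assumption
    have h2 : m i + m j ≤ ∑ k ∈ m.support, m k := by
      rw [← Finset.sum_pair (Ne.symm hj)]
      exact Finset.sum_le_sum_of_subset hsub
    rw [hs] at h2
    omega

lemma Va_rec_term (a k : ℕ) (m : ℕ →₀ ℕ) (hk : k ∈ m.support)
    (hC : wt m + (a + 1) = deg m) (hn : 2 ≤ deg m) :
    (k.factorial : ℂ)⁻¹ * MvPowerSeries.coeff (m - Finsupp.single k 1) (Va (a + k)) =
      (((a + k) * m k : ℕ) : ℂ) * (((deg m - 2).factorial : ℕ) : ℂ) / den m := by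
  have hmk : m k ≠ 0 := Finsupp.mem_support_iff.1 hk
  have h1 : wt (m - Finsupp.single k 1) + k = wt m := wt_sub_single hmk
  have h2 : deg (m - Finsupp.single k 1) + 1 = deg m := deg_sub_single hmk
  rcases Nat.eq_zero_or_pos (a + k) with h0 | hpos
  · obtain ⟨ha, hk0⟩ : a = 0 ∧ k = 0 := by omega
    subst ha; subst hk0
    rw [h0, coeff_Va_zero, if_neg, Nat.zero_mul]
    · simp
    · intro heq
      have : m = Finsupp.single 0 1 := by
        have := sub_add_single hmk
        rw [heq, zero_add] at this
        exact this.symm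
      rw [this, deg_single] at hn
      omega
  · obtain ⟨b, hb⟩ : ∃ b, a + k = b + 1 := ⟨a + k - 1, by omega⟩
    rw [hb, coeff_Va_succ, if_pos (by omega)]
    have hd2 : deg (m - Finsupp.single k 1) - 1 = deg m - 2 := by omega
    rw [hd2]
    have hden := den_sub_single hmk
    rw [hden]
    have hne1 : den (m - Finsupp.single k 1) ≠ 0 := den_ne_zero _
    have hne2 : (k.factorial : ℂ) ≠ 0 := Nat.cast_ne_zero.2 (Nat.factorial_ne_zero _)
    have hne3 : (m k : ℂ) ≠ 0 := Nat.cast_ne_zero.2 hmk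
    field_simp
    push_cast [hb]
    ring

lemma Va_rec (a : ℕ) (m : ℕ →₀ ℕ) :
    MvPowerSeries.coeff m (Va (a + 1)) =
      ∑ k ∈ m.support, (k.factorial : ℂ)⁻¹ *
        MvPowerSeries.coeff (m - Finsupp.single k 1) (Va (a + k)) := by
  rw [coeff_Va_succ]
  by_cases hC : wt m + (a + 1) = deg m
  · rw [if_pos hC]
    rcases Nat.lt_or_ge (deg m) 2 with hn | hn
    · -- deg m = 1, a = 0, m = single 0 1
      have hd1 : deg m = 1 := by omega
      have ha : a = 0 := by omega
      obtain ⟨i, hi⟩ := eq_single_of_deg_one hd1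
      have hi0 : i = 0 := by
        have := hC
        rw [hi, wt_single, deg_single] at this
        omega
      subst hi0; subst ha
      rw [hi]
      have hsupp : (Finsupp.single 0 1 : ℕ →₀ ℕ).support = {0} := Finsupp.support_single_ne_zero _ one_ne_zero
      rw [hsupp, Finset.sum_singleton]
      have : (Finsupp.single 0 1 - Finsupp.single 0 1 : ℕ →₀ ℕ) = 0 := by simp
      rw [this, coeff_Va_zero, if_pos rfl]
      rw [deg_single]
      have : den (Finsupp.single 0 1) = 1 := by
        rw [den, Finsupp.prod_single_index] <;> simp
      rw [this]
      simp
    · -- deg m ≥ 2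
      rw [Finset.sum_congr rfl (fun k hk => Va_rec_term a k m hk hC hn)]
      rw [← Finset.sum_div, ← Finset.sum_mul, ← Nat.cast_sum]
      have hsum : ∑ k ∈ m.support, (a + k) * m k = a * deg m + wt m := by
        have h1 : deg m = ∑ k ∈ m.support, m k := rfl
        have h2 : wt m = ∑ k ∈ m.support, k * m k := rfl
        rw [h1, h2, Finset.mul_sum, ← Finset.sum_add_distrib]
        exact Finset.sum_congr rfl fun k _ => by ring
      rw [hsum]
      obtain ⟨p, hp⟩ : ∃ p, deg m = p + 2 := ⟨deg m - 2, by omega⟩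
      have hval : a * deg m + wt m = (a + 1) * (p + 1) := by
        have hw : wt m + a = p + 1 := by omega
        calc a * deg m + wt m = a * (p + 2) + wt m := by rw [hp]
          _ = a * (p + 1) + (wt m + a) := by ring
          _ = a * (p + 1) + (p + 1) := by rw [hw]
          _ = (a + 1) * (p + 1) := by ring
      rw [hval, hp]
      have hf1 : (p + 2 - 1) = p + 1 := rfl
      have hf2 : (p + 2 - 2) = p := rfl
      rw [hf1, hf2, Nat.factorial_succ]
      push_cast
      ring
  · rw [if_neg hC]
    symm
    apply Finset.sum_eq_zero
    intro k hk
    have hmk : m k ≠ 0 := Finsupp.mem_support_iff.1 hk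
    have h1 : wt (m - Finsupp.single k 1) + k = wt m := wt_sub_single hmk
    have h2 : deg (m - Finsupp.single k 1) + 1 = deg m := deg_sub_single hmk
    rcases Nat.eq_zero_or_pos (a + k) with h0 | hpos
    · obtain ⟨ha, hk0⟩ : a = 0 ∧ k = 0 := by omega
      subst ha; subst hk0
      rw [h0, coeff_Va_zero, if_neg, mul_zero]
      intro heq
      have hm : m = Finsupp.single 0 1 := by
        have := sub_add_single hmk
        rw [heq, zero_add] at this
        exact this.symm
      apply hC
      rw [hm, wt_single, deg_single]
    · obtain ⟨b, hb⟩ : ∃ b, a + k = b + 1 := ⟨a + k - 1, by omega⟩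
      rw [hb, coeff_Va_succ, if_neg (by omega), mul_zero]
lemma eq_zero_of_deg_eq_zero {m : ℕ →₀ ℕ} (h : deg m = 0) : m = 0 := by
  ext i
  by_contra hi
  have his : i ∈ m.support := Finsupp.mem_support_iff.2 (by simpa using hi)
  have hle : m i ≤ ∑ k ∈ m.support, m k :=
    Finset.single_le_sum (f := fun k => m k) (fun _ _ => Nat.zero_le _) his
  have : (∑ k ∈ m.support, m k) = 0 := h
  simp at hi
  omega

lemma deg_zero : deg (0 : ℕ →₀ ℕ) = 0 := by simp [deg]
lemma wt_zero : wt (0 : ℕ →₀ ℕ) = 0 := by simp [wt]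

lemma inner_swap (c b k : ℕ) (m : ℕ →₀ ℕ) (hk : k ∈ m.support) :
    ∑ p ∈ Finset.HasAntidiagonal.antidiagonal m, (if p.1 k = 0 then 0 else
        (k.factorial : ℂ)⁻¹ * MvPowerSeries.coeff (p.1 - Finsupp.single k 1) (Va c) *
          MvPowerSeries.coeff p.2 (Va b)) =
    (k.factorial : ℂ)⁻¹ * MvPowerSeries.coeff (m - Finsupp.single k 1) (Va c * Va b) := by
  classical
  have hmk : m k ≠ 0 := Finsupp.mem_support_iff.1 hk
  rw [MvPowerSeries.coeff_mul, Finset.mul_sum]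
  rw [show (∑ p ∈ Finset.HasAntidiagonal.antidiagonal m, (if p.1 k = 0 then 0 else
      (k.factorial : ℂ)⁻¹ * MvPowerSeries.coeff (p.1 - Finsupp.single k 1) (Va c) *
        MvPowerSeries.coeff p.2 (Va b))) =
      ∑ p ∈ (Finset.HasAntidiagonal.antidiagonal m).filter (fun p => ¬ p.1 k = 0),
      (k.factorial : ℂ)⁻¹ * MvPowerSeries.coeff (p.1 - Finsupp.single k 1) (Va c) *
        MvPowerSeries.coeff p.2 (Va b) from by
    rw [Finset.sum_filter]
    exact Finset.sum_congr rfl fun p _ => by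
      by_cases h : p.1 k = 0 <;> simp [h]]
  refine Finset.sum_nbij' (fun p => (p.1 - Finsupp.single k 1, p.2))
    (fun q => (q.1 + Finsupp.single k 1, q.2)) ?_ ?_ ?_ ?_ ?_
  · intro p hp
    rw [Finset.mem_filter, Finset.HasAntidiagonal.mem_antidiagonal] at hp
    rw [Finset.HasAntidiagonal.mem_antidiagonal]
    have hle : Finsupp.single k 1 ≤ p.1 :=
      Finsupp.single_le_iff.2 (Nat.one_le_iff_ne_zero.2 hp.2)
    calc p.1 - Finsupp.single k 1 + p.2 = p.1 + p.2 - Finsupp.single k 1 :=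
          tsub_add_eq_add_tsub hle
      _ = m - Finsupp.single k 1 := by rw [hp.1]
  · intro q hq
    rw [Finset.HasAntidiagonal.mem_antidiagonal] at hq
    rw [Finset.mem_filter, Finset.HasAntidiagonal.mem_antidiagonal]
    constructor
    · calc q.1 + Finsupp.single k 1 + q.2 = (q.1 + q.2) + Finsupp.single k 1 := by
            abel
        _ = (m - Finsupp.single k 1) + Finsupp.single k 1 := by rw [hq]
        _ = m := sub_add_single hmk
    · simp
  · intro p hp
    rw [Finset.mem_filter, Finset.HasAntidiagonal.mem_antidiagonal] at hp
    have hle : Finsupp.single k 1 ≤ p.1 :=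
      Finsupp.single_le_iff.2 (Nat.one_le_iff_ne_zero.2 hp.2)
    ext : 1
    · exact tsub_add_cancel_of_le hle
    · rfl
  · intro q _
    ext : 1
    · exact add_tsub_cancel_right _ _
    · rfl
  · intro p _
    ring
lemma coeff_Va_zero_index (a : ℕ) :
    MvPowerSeries.coeff (0 : ℕ →₀ ℕ) (Va (a + 1)) = 0 := by
  rw [coeff_Va_succ, if_neg]
  rw [deg_zero, wt_zero]
  omega

lemma coeff_Va_mul_aux : ∀ n a b : ℕ, ∀ m : ℕ →₀ ℕ, deg m ≤ n →
    MvPowerSeries.coeff m (Va a * Va b) = MvPowerSeries.coeff m (Va (a + b)) := by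
  intro n
  induction n with
  | zero =>
    intro a b m hm
    have hm0 : m = 0 := eq_zero_of_deg_eq_zero (Nat.le_zero.1 hm)
    subst hm0
    match a with
    | 0 => rw [show Va 0 = 1 from rfl, one_mul, Nat.zero_add]
    | a' + 1 =>
      rw [MvPowerSeries.coeff_mul]
      rw [show (Finset.HasAntidiagonal.antidiagonal (0 : ℕ →₀ ℕ)) = {(0, 0)} from Finsupp.antidiagonal_zero]
      rw [Finset.sum_singleton, coeff_Va_zero_index, zero_mul]
      rw [show a' + 1 + b = (a' + b) + 1 by omega, coeff_Va_zero_index]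
  | succ n ih =>
    intro a b m hm
    match a with
    | 0 => rw [show Va 0 = 1 from rfl, one_mul, Nat.zero_add]
    | a' + 1 =>
      rcases le_or_gt (deg m) n with hle | hgt
      · exact ih _ b m hle
      have hm1 : deg m = n + 1 := by omega
      rw [MvPowerSeries.coeff_mul]
      have step1 : ∀ p ∈ Finset.HasAntidiagonal.antidiagonal m,
          MvPowerSeries.coeff p.1 (Va (a' + 1)) * MvPowerSeries.coeff p.2 (Va b)
            = ∑ k ∈ m.support, (if p.1 k = 0 then 0 else (k.factorial : ℂ)⁻¹ *
                MvPowerSeries.coeff (p.1 - Finsupp.single k 1) (Va (a' + k)) *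
                MvPowerSeries.coeff p.2 (Va b)) := by
        intro p hp
        rw [Finset.HasAntidiagonal.mem_antidiagonal] at hp
        have hsub : p.1.support ⊆ m.support := by
          intro k hk
          rw [Finsupp.mem_support_iff] at hk ⊢
          have : m k = p.1 k + p.2 k := by rw [← hp]; rfl
          omega
        rw [Va_rec a' p.1, Finset.sum_mul]
        calc ∑ k ∈ p.1.support, (k.factorial : ℂ)⁻¹ *
              MvPowerSeries.coeff (p.1 - Finsupp.single k 1) (Va (a' + k)) *
              MvPowerSeries.coeff p.2 (Va b)
            = ∑ k ∈ p.1.support, (if p.1 k = 0 then 0 else (k.factorial : ℂ)⁻¹ *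
                MvPowerSeries.coeff (p.1 - Finsupp.single k 1) (Va (a' + k)) *
                MvPowerSeries.coeff p.2 (Va b)) := by
              refine Finset.sum_congr rfl fun k hk => ?_
              rw [if_neg (Finsupp.mem_support_iff.1 hk)]
          _ = _ := by
              refine Finset.sum_subset hsub fun k _ hk => ?_
              rw [if_pos (Finsupp.notMem_support_iff.1 hk)]
      rw [Finset.sum_congr rfl step1, Finset.sum_comm]
      have step2 : ∀ k ∈ m.support,
          (∑ p ∈ Finset.HasAntidiagonal.antidiagonal m, (if p.1 k = 0 then 0 else (k.factorial : ℂ)⁻¹ *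
              MvPowerSeries.coeff (p.1 - Finsupp.single k 1) (Va (a' + k)) *
              MvPowerSeries.coeff p.2 (Va b)))
            = (k.factorial : ℂ)⁻¹ *
              MvPowerSeries.coeff (m - Finsupp.single k 1) (Va (a' + b + k)) := by
        intro k hk
        rw [inner_swap (a' + k) b k m hk]
        have hdeg : deg (m - Finsupp.single k 1) ≤ n := by
          have := deg_sub_single (Finsupp.mem_support_iff.1 hk)
          omega
        rw [ih (a' + k) b _ hdeg, show a' + k + b = a' + b + k by omega]
      rw [Finset.sum_congr rfl step2, ← Va_rec (a' + b) m,
        show a' + 1 + b = a' + b + 1 by omega]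

lemma Va_mul (a b : ℕ) : Va a * Va b = Va (a + b) := by
  ext m
  exact coeff_Va_mul_aux (deg m) a b m le_rfl

lemma vtop_eq_Va1 : vtop = Va 1 := by
  ext m
  rw [MvPowerSeries.coeff_apply, MvPowerSeries.coeff_apply]
  show (if 1 ≤ deg m ∧ wt m + 1 = deg m then
      (((deg m - 1).factorial : ℕ) : ℂ) / den m else 0) = _
  show _ = (if wt m + 1 = deg m then (((0 + 1 : ℕ)) : ℂ) *
      (((deg m - 1).factorial : ℕ) : ℂ) / den m else 0)
  by_cases h : wt m + 1 = deg m
  · rw [if_pos ⟨by omega, h⟩, if_pos h]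
    push_cast
    ring
  · rw [if_neg (fun hc => h hc.2), if_neg h]

lemma vtop_pow (a : ℕ) : vtop ^ a = Va a := by
  induction a with
  | zero => rfl
  | succ a ih => rw [pow_succ, ih, vtop_eq_Va1, Va_mul]
lemma coeff_pd (i : ℕ) (f : MvPowerSeries ℕ ℂ) (m : ℕ →₀ ℕ) :
    MvPowerSeries.coeff m (pd i f) =
      ((m i : ℂ) + 1) * MvPowerSeries.coeff (m + Finsupp.single i 1) f := rfl

lemma pd_smul (i : ℕ) (c : ℂ) (f : MvPowerSeries ℕ ℂ) : pd i (c • f) = c • pd i f := by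
  ext m
  rw [map_smul, smul_eq_mul, coeff_pd, coeff_pd, map_smul, smul_eq_mul]
  ring

lemma pd_comm (i j : ℕ) (f : MvPowerSeries ℕ ℂ) : pd i (pd j f) = pd j (pd i f) := by
  by_cases hij : i = j
  · subst hij; rfl
  ext m
  rw [coeff_pd, coeff_pd, coeff_pd, coeff_pd]
  have h1 : ((m + Finsupp.single i 1 : ℕ →₀ ℕ)) j = m j := by
    rw [Finsupp.add_apply, Finsupp.single_eq_of_ne' hij, add_zero]
  have h2 : ((m + Finsupp.single j 1 : ℕ →₀ ℕ)) i = m i := by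
    rw [Finsupp.add_apply, Finsupp.single_eq_of_ne' (Ne.symm hij), add_zero]
  rw [h1, h2, add_right_comm]
  ring

lemma pd_iterate_smul (N : ℕ) (c : ℂ) (f : MvPowerSeries ℕ ℂ) :
    (pd 0)^[N] (c • f) = c • (pd 0)^[N] f := by
  induction N generalizing f with
  | zero => rfl
  | succ N ih =>
    rw [Function.iterate_succ_apply, pd_smul, ih, ← Function.iterate_succ_apply]

lemma pd_iterate_comm (k N : ℕ) (f : MvPowerSeries ℕ ℂ) :
    pd k ((pd 0)^[N] f) = (pd 0)^[N] (pd k f) := by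
  induction N generalizing f with
  | zero => rfl
  | succ N ih => rw [Function.iterate_succ_apply, ih, pd_comm, Function.iterate_succ_apply]

lemma pd_Va (j a : ℕ) :
    pd j (Va (a + 1)) =
      (((a + 1 : ℕ) : ℂ) * ((((a + j + 1 : ℕ)) : ℂ) * (j.factorial : ℂ))⁻¹) •
        pd 0 (Va (a + j + 1)) := by
  ext m
  rw [map_smul, smul_eq_mul, coeff_pd, coeff_pd, coeff_Va_succ, coeff_Va_succ]
  have hj : deg (m + Finsupp.single j 1) = deg m + 1 := by rw [deg_add, deg_single]
  have hwj : wt (m + Finsupp.single j 1) = wt m + j := by rw [wt_add, wt_single, mul_one]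
  have h0 : deg (m + Finsupp.single 0 1) = deg m + 1 := by rw [deg_add, deg_single]
  have hw0 : wt (m + Finsupp.single 0 1) = wt m := by rw [wt_add, wt_single]; ring
  have hdenj : den (m + Finsupp.single j 1) =
      ((m j : ℂ) + 1) * (j.factorial : ℂ) * den m := by
    have hne : (m + Finsupp.single j 1 : ℕ →₀ ℕ) j ≠ 0 := by
      rw [Finsupp.add_apply, Finsupp.single_eq_same]; omega
    have := den_sub_single hne
    rw [add_tsub_cancel_right] at this
    rw [this, Finsupp.add_apply, Finsupp.single_eq_same]
    push_cast
    ring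
  have hden0 : den (m + Finsupp.single 0 1) = ((m 0 : ℂ) + 1) * den m := by
    have hne : (m + Finsupp.single 0 1 : ℕ →₀ ℕ) 0 ≠ 0 := by
      rw [Finsupp.add_apply, Finsupp.single_eq_same]; omega
    have := den_sub_single hne
    rw [add_tsub_cancel_right] at this
    rw [this, Finsupp.add_apply, Finsupp.single_eq_same]
    push_cast
    simp [Nat.factorial]
  by_cases hC : wt m + j + (a + 1) = deg m + 1
  · rw [hj, hwj, if_pos (by omega), h0, hw0, if_pos (by omega)]
    rw [hdenj, hden0]
    have e1 : deg m + 1 - 1 = deg m := by omega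
    rw [e1]
    have n1 : ((m j : ℂ) + 1) ≠ 0 := Nat.cast_add_one_ne_zero _
    have n2 : ((m 0 : ℂ) + 1) ≠ 0 := Nat.cast_add_one_ne_zero _
    have n3 : (j.factorial : ℂ) ≠ 0 := Nat.cast_ne_zero.2 (Nat.factorial_ne_zero _)
    have n4 : den m ≠ 0 := den_ne_zero m
    have n5 : ((a + j + 1 : ℕ) : ℂ) ≠ 0 := Nat.cast_ne_zero.2 (by omega)
    have key : ∀ xj x0 A F J S D : ℂ, xj ≠ 0 → x0 ≠ 0 → J ≠ 0 → S ≠ 0 → D ≠ 0 →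
        xj * (A * F / (xj * J * D)) = A * (S * J)⁻¹ * (x0 * (S * F / (x0 * (1 * D)))) := by
      intro xj x0 A F J S D hxj hx0 hJ hS hD
      field_simp
    have e2 : ((a + 1 + j : ℕ) : ℂ) = ((a + j + 1 : ℕ) : ℂ) := by push_cast; ring
    calc ((m j : ℂ) + 1) * (((a + 1 : ℕ) : ℂ) * ((deg m).factorial : ℂ) /
            (((m j : ℂ) + 1) * (j.factorial : ℂ) * den m))
        = ((a + 1 : ℕ) : ℂ) * (((a + j + 1 : ℕ) : ℂ) * (j.factorial : ℂ))⁻¹ *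
            (((m 0 : ℂ) + 1) * (((a + j + 1 : ℕ) : ℂ) * ((deg m).factorial : ℂ) /
              (((m 0 : ℂ) + 1) * (1 * den m)))) :=
          key _ _ _ _ _ _ _ n1 n2 n3 n5 n4
      _ = _ := by norm_num
  · rw [hj, hwj, if_neg (by omega), h0, hw0, if_neg (by omega)]
    ring

lemma prod_factorials_ne_zero (L : List ℕ) : ((L.map Nat.factorial).prod : ℂ) ≠ 0 := by
  have hp : 0 < (L.map Nat.factorial).prod := by
    refine List.prod_pos fun a ha => ?_
    rw [List.mem_map] at ha
    obtain ⟨b, _, hb⟩ := ha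
    rw [← hb]
    exact Nat.factorial_pos b
  exact Nat.cast_ne_zero.2 (Nat.pos_iff_ne_zero.1 hp)

lemma main_aux (l : List ℕ) (hl : l ≠ []) :
    List.foldr pd vtop l =
      ((((l.map Nat.factorial).prod * (l.sum + 1) : ℕ) : ℂ))⁻¹ •
        (pd 0)^[l.length] (Va (l.sum + 1)) := by
  induction l with
  | nil => exact absurd rfl hl
  | cons k l ih =>
    cases l with
    | nil =>
      simp only [List.foldr_cons, List.foldr_nil, List.map_cons, List.map_nil, List.prod_cons,
        List.prod_nil, List.sum_cons, List.sum_nil, List.length_cons, List.length_nil,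
        Nat.add_zero, Nat.zero_add, Nat.mul_one, Function.iterate_one]
      rw [vtop_eq_Va1]
      have h := pd_Va k 0
      rw [show 0 + 1 = 1 from rfl, show 0 + k + 1 = k + 1 by omega] at h
      rw [h]
      congr 1
      have hk1 : ((k + 1 : ℕ) : ℂ) ≠ 0 := Nat.cast_ne_zero.2 (by omega)
      have hkf : ((k.factorial : ℕ) : ℂ) ≠ 0 := Nat.cast_ne_zero.2 (Nat.factorial_ne_zero _)
      push_cast
      field_simp
    | cons k' l' =>
      have hK : (k' :: l') ≠ [] := by simp
      have ihK := ih hK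
      simp only [List.foldr_cons, List.map_cons, List.prod_cons, List.sum_cons,
        List.length_cons] at ihK ⊢
      rw [ihK, pd_smul, pd_iterate_comm]
      have h := pd_Va k (k' + l'.sum)
      rw [show k' + l'.sum + k + 1 = k + (k' + l'.sum) + 1 by omega] at h
      rw [h, pd_iterate_smul, smul_smul, ← Function.iterate_succ_apply]
      congr 1
      have h5 := prod_factorials_ne_zero l'
      generalize (List.map Nat.factorial l').prod = P at h5 ⊢
      generalize l'.sum = s
      have h2 : ((k' + s + 1 : ℕ) : ℂ) ≠ 0 := Nat.cast_ne_zero.2 (by omega)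
      have key : ∀ A B C D : ℂ, B ≠ 0 → (A * B)⁻¹ * (B * (C * D)⁻¹) = (D * A * C)⁻¹ := by
        intro A B C D hB
        calc (A * B)⁻¹ * (B * (C * D)⁻¹)
            = (A⁻¹ * C⁻¹ * D⁻¹) * (B⁻¹ * B) := by rw [mul_inv, mul_inv]; ring
          _ = (D * A * C)⁻¹ := by
              rw [inv_mul_cancel₀ hB, mul_one, mul_inv, mul_inv]; ring
      simp only [Nat.cast_mul]
      exact key _ _ _ _ h2


/-- For the topological solution `v` of the Riemann hierarchy and any `k_1,…,k_N ≥ 0`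
(`N ≥ 1`), `∂_{t_{k_1}}⋯∂_{t_{k_N}} v = ∂_x^N ( v^{k_1+⋯+k_N+1}/(k_1!⋯k_N!(k_1+⋯+k_N+1)) )`. -/
theorem vtop_mixed_derivatives (l : List ℕ) (hl : l ≠ []) :
    List.foldr pd vtop l =
      ((((l.map Nat.factorial).prod * (l.sum + 1) : ℕ) : ℂ))⁻¹ •
        (pd 0)^[l.length] (vtop ^ (l.sum + 1)) := by
  rw [vtop_pow]
  exact main_aux l hl
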